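/- Let V be a finite-dimensional vector space of dimension n over a field K, and let f be a regular nilpotent endomorphism of V (f^n = 0 and f^(n-1) ≠ 0). Then there exists exactly one complete flag 0 = D_0 ⊆ D_1 ⊆ ⋯ ⊆ D_n = V (with dim D_l = l) satisfying f(D_l) ⊆ D_{l-1} for all l = 1, …, n. -/

import Mathlib

open LinearMap Module

/-- If `f` is a regular nilpotent endomorphism of an `n`-dimensional vector space `V`
(`f ^ n = 0` and `f ^ (n-1) ≠ 0`), then there exists exactly one complete flag
`0 = D_0 ⊆ D_1 ⊆ ⋯ ⊆ D_n = V` (with `dim D_l = l`) satisfying `f (D_l) ⊆ D_{l-1}`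
for all `l = 1, …, n`. -/
theorem regular_nilpotent_existsUnique_flag
    {K V : Type*} [Field K] [AddCommGroup V] [Module K V] [FiniteDimensional K V]
    {n : ℕ} (hn : Module.finrank K V = n)
    (f : V →ₗ[K] V) (hfn : f ^ n = 0) (hfn1 : f ^ (n - 1) ≠ 0) :
    ∃! D : Fin (n + 1) → Submodule K V,
      D 0 = ⊥ ∧ D (Fin.last n) = ⊤ ∧
      (∀ l : Fin (n + 1), Module.finrank K (D l) = (l : ℕ)) ∧
      (∀ l : Fin n, D l.castSucc ≤ D l.succ) ∧
      (∀ l : Fin n, Submodule.map f (D l.succ) ≤ D l.castSucc) := by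
  classical
  have hle : ∀ m : ℕ, ker (f ^ m) ≤ ker (f ^ (m + 1)) := by
    intro m x hx
    simp only [mem_ker] at hx ⊢
    rw [pow_succ']
    simp [hx]
  have hstrict : ∀ m : ℕ, m < n → ker (f ^ m) < ker (f ^ (m + 1)) := by
    intro m hm
    rcases lt_or_eq_of_le (hle m) with h | h
    · exact h
    · exfalso
      apply hfn1
      have h2 : ker (f ^ m) = ker (f ^ (m + (n - 1 - m))) :=
        Module.End.ker_pow_constant h _
      have h3 : ker (f ^ m) = ker (f ^ (m + (n - m))) :=
        Module.End.ker_pow_constant h _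
      have e1 : m + (n - 1 - m) = n - 1 := by omega
      have e2 : m + (n - m) = n := by omega
      rw [e1] at h2; rw [e2] at h3
      have : ker (f ^ (n - 1)) = ⊤ := by
        rw [← h2, h3, hfn]; exact ker_zero
      rw [← ker_eq_top]; exact this
  -- finrank (ker (f^m)) = m for m ≤ n
  have hlow : ∀ m : ℕ, m ≤ n → m ≤ finrank K (ker (f ^ m)) := by
    intro m
    induction m with
    | zero => simp
    | succ k ih =>
      intro hk
      have h1 := ih (by omega)
      have h2 := Submodule.finrank_lt_finrank_of_lt (hstrict k (by omega))
      omega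
  have hgap : ∀ m k : ℕ, m + k ≤ n →
      finrank K (ker (f ^ m)) + k ≤ finrank K (ker (f ^ (m + k))) := by
    intro m k
    induction k with
    | zero => simp
    | succ j ih =>
      intro hk
      have h1 := ih (by omega)
      have h2 := Submodule.finrank_lt_finrank_of_lt (hstrict (m + j) (by omega))
      have : m + (j + 1) = (m + j) + 1 := by omega
      rw [this]
      omega
  have hkertop : ker (f ^ n) = ⊤ := by rw [hfn]; exact ker_zero
  have hrank : ∀ m : ℕ, m ≤ n → finrank K (ker (f ^ m)) = m := by
    intro m hm
    have h1 := hlow m hm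
    have h2 := hgap m (n - m) (by omega)
    have e : m + (n - m) = n := by omega
    rw [e, hkertop] at h2
    have : finrank K (⊤ : Submodule K V) = n := by rw [finrank_top, hn]
    omega
  refine ⟨fun l => ker (f ^ (l : ℕ)), ⟨?_, ?_, ?_, ?_, ?_⟩, ?_⟩
  · show ker (f ^ ((0 : Fin (n+1)) : ℕ)) = ⊥
    rw [Fin.val_zero, pow_zero, Module.End.one_eq_id, ker_id]
  · simpa using hkertop
  · intro l; exact hrank l (by omega)
  · intro l
    simpa using hle (l : ℕ)
  · intro l x hx
    obtain ⟨y, hy, rfl⟩ := hx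
    simp only [mem_ker, Fin.coe_castSucc] at *
    have : (f ^ ((l : ℕ) + 1)) y = 0 := by simpa using hy
    rw [pow_succ] at this
    simpa using this
  · intro D ⟨h0, htop, hfr, hmono, hmap⟩
    have key : ∀ l : Fin (n + 1), D l = ker (f ^ (l : ℕ)) := by
      intro l
      have hsub : ∀ l : Fin (n + 1), D l ≤ ker (f ^ (l : ℕ)) := by
        intro l
        induction l using Fin.induction with
        | zero => simp [h0]
        | succ i ih =>
          intro x hx
          have hfx : f x ∈ D i.castSucc := hmap i ⟨x, hx, rfl⟩
          have := ih hfx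
          simp only [mem_ker, Fin.coe_castSucc] at this
          simp only [mem_ker, Fin.val_succ]
          rw [pow_succ]
          simpa using this
      exact Submodule.eq_of_le_of_finrank_eq (hsub l)
        (by rw [hrank (l : ℕ) (by omega), hfr l])
    funext l
    exact key l
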